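/- Birch's Theorem (irrational version): for a finite set 𝒜 = {a₁,...,aₘ} ⊂ ℝⁿ, the map p ↦ Σᵢ pᵢ aᵢ restricts to a bijection (in fact a homeomorphism) from the irrational affine toric variety X_𝒜 ⊆ ℝ≥0^𝒜 onto cone(𝒜). -/

import Mathlib

open Real

/-- The irrational affine toric variety `X_𝒜`: the closure in `ℝ≥0^𝒜` of the image of the
positive torus under the monomial map `v ↦ (exp(−⟨aᵢ, v⟩))ᵢ`. -/
noncomputable def toricX {n m : ℕ} (A : Fin m → (Fin n → ℝ)) : Set (Fin m → ℝ) :=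
  closure (Set.range fun v : Fin n → ℝ => fun i => Real.exp (-(∑ j, A i j * v j)))

/-- The cone generated by `𝒜 = {a₁, …, aₘ}`. -/
def coneOfFam {n m : ℕ} (A : Fin m → (Fin n → ℝ)) : Set (Fin n → ℝ) :=
  {x | ∃ c : Fin m → ℝ, (∀ i, 0 ≤ c i) ∧ x = ∑ i, c i • A i}


namespace BirchAux
open Filter

variable {n m : ℕ}

def lmap (A : Fin m → Fin n → ℝ) (p : Fin m → ℝ) : Fin n → ℝ := ∑ i, p i • A i

noncomputable def ent (p : Fin m → ℝ) : ℝ := ∑ i, (p i + negMulLog (p i))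

def fib (A : Fin m → Fin n → ℝ) (y : Fin n → ℝ) : Set (Fin m → ℝ) :=
  {p | (∀ i, 0 ≤ p i) ∧ lmap A p = y}

noncomputable def emap (A : Fin m → Fin n → ℝ) (v : Fin n → ℝ) : Fin m → ℝ :=
  fun i => Real.exp (-(∑ j, A i j * v j))

lemma lmap_apply (A : Fin m → Fin n → ℝ) (p : Fin m → ℝ) (j : Fin n) :
    lmap A p j = ∑ i, p i * A i j := by
  simp [lmap, Finset.sum_apply]

lemma continuous_lmap (A : Fin m → Fin n → ℝ) : Continuous (lmap A) := by
  apply continuous_pi; intro j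
  have : (fun p => lmap A p j) = fun p : Fin m → ℝ => ∑ i, p i * A i j := by
    funext p; exact lmap_apply A p j
  rw [show (fun p => lmap A p j) = fun p : Fin m → ℝ => ∑ i, p i * A i j from this]
  exact continuous_finset_sum _ fun i _ => (continuous_apply i).mul continuous_const

lemma continuous_ent : Continuous (ent (m := m)) := by
  apply continuous_finset_sum
  intro i _
  exact (continuous_apply i).add (continuous_negMulLog.comp (continuous_apply i))

lemma emap_pos (A : Fin m → Fin n → ℝ) (v : Fin n → ℝ) (i : Fin m) : 0 < emap A v i :=
  Real.exp_pos _

lemma log_emap (A : Fin m → Fin n → ℝ) (v : Fin n → ℝ) (i : Fin m) :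
    Real.log (emap A v i) = -(∑ j, A i j * v j) := Real.log_exp _

/-- pointwise Gibbs inequality. -/
lemma gibbs_le {p q : ℝ} (hq : 0 ≤ q) (hp : 0 < p) :
    q + negMulLog q ≤ p - q * Real.log p := by
  rcases eq_or_lt_of_le hq with h | h
  · simp [← h]; positivity
  · have h1 : Real.log (p / q) ≤ p / q - 1 := Real.log_le_sub_one_of_pos (by positivity)
    rw [Real.log_div hp.ne' h.ne'] at h1
    have h2 : q * (Real.log p - Real.log q) ≤ q * (p / q - 1) :=
      mul_le_mul_of_nonneg_left h1 hq
    have h3 : q * (p / q - 1) = p - q := by field_simp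
    simp only [negMulLog]
    nlinarith

lemma gibbs_lt {p q : ℝ} (hq : 0 ≤ q) (hp : 0 < p) (hne : q ≠ p) :
    q + negMulLog q < p - q * Real.log p := by
  rcases eq_or_lt_of_le hq with h | h
  · simp [← h]; positivity
  · have h1 : Real.log (p / q) < p / q - 1 := by
      apply Real.log_lt_sub_one_of_pos (by positivity)
      intro hc
      exact hne (by field_simp at hc; linarith)
    rw [Real.log_div hp.ne' h.ne'] at h1
    have h2 : q * (Real.log p - Real.log q) < q * (p / q - 1) :=
      (mul_lt_mul_iff_right₀ h).mpr h1
    have h3 : q * (p / q - 1) = p - q := by field_simp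
    simp only [negMulLog]
    nlinarith

lemma ent_def (p : Fin m → ℝ) : ent p = ∑ i, (p i + negMulLog (p i)) := rfl

lemma isClosed_nonneg : IsClosed {p : Fin m → ℝ | ∀ i, 0 ≤ p i} := by
  have h : {p : Fin m → ℝ | ∀ i, 0 ≤ p i} = ⋂ i, {p | 0 ≤ p i} := by
    ext p; simp [Set.mem_iInter]
  rw [h]
  exact isClosed_iInter fun i => isClosed_le continuous_const (continuous_apply i)

/-- swap lemma: `∑ᵢ pᵢ ⟨aᵢ, v⟩ = ⟨L p, v⟩`. -/
lemma sum_mul_swap (A : Fin m → Fin n → ℝ) (p : Fin m → ℝ) (v : Fin n → ℝ) :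
    ∑ i, p i * (∑ j, A i j * v j) = ∑ j, lmap A p j * v j := by
  simp only [lmap_apply, Finset.sum_mul, Finset.mul_sum]
  rw [Finset.sum_comm]
  congr 1; funext i; congr 1; funext j; ring

/-- key fact: a torus point maximizes entropy on its fiber, strictly. -/
lemma torus_max (A : Fin m → Fin n → ℝ) (v : Fin n → ℝ) {q : Fin m → ℝ}
    (hq : q ∈ fib A (lmap A (emap A v))) :
    ent q ≤ ent (emap A v) ∧ (q ≠ emap A v → ent q < ent (emap A v)) := by
  set p := emap A v with hp
  obtain ⟨hq0, hqL⟩ := hq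
  have key : ∑ i, (p i - q i * Real.log (p i)) = ent p := by
    have e1 : ∀ i : Fin m, q i * Real.log (p i) = -(q i * (∑ j, A i j * v j)) := by
      intro i; rw [log_emap]; ring
    have e2 : ∀ i : Fin m, p i * Real.log (p i) = -(p i * (∑ j, A i j * v j)) := by
      intro i; rw [log_emap]; ring
    have swq := sum_mul_swap A q v
    have swp := sum_mul_swap A p v
    rw [hqL] at swq
    calc ∑ i, (p i - q i * Real.log (p i))
        = ∑ i, p i + ∑ i, (q i * (∑ j, A i j * v j)) := by
          rw [← Finset.sum_add_distrib]; congr 1; funext i; rw [e1]; ring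
      _ = ∑ i, p i + ∑ i, (p i * (∑ j, A i j * v j)) := by rw [swq, swp]
      _ = ∑ i, (p i + negMulLog (p i)) := by
          rw [← Finset.sum_add_distrib]
          refine Finset.sum_congr rfl fun i _ => ?_
          have h2 := e2 i
          rw [negMulLog]
          linarith
      _ = ent p := rfl
  constructor
  · rw [← key, ent_def]
    exact Finset.sum_le_sum fun i _ => gibbs_le (hq0 i) (emap_pos A v i)
  · intro hne
    obtain ⟨i0, hi0⟩ : ∃ i, q i ≠ p i := by
      by_contra hc; push_neg at hc; exact hne (funext hc)
    rw [← key, ent_def]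
    exact Finset.sum_lt_sum (fun i _ => gibbs_le (hq0 i) (emap_pos A v i))
      ⟨i0, Finset.mem_univ _, gibbs_lt (hq0 i0) (emap_pos A v i0) hi0⟩

/-- the summand of the entropy is at most `1`. -/
lemma hfun_le_one {t : ℝ} (ht : 0 ≤ t) : t + negMulLog t ≤ 1 := by
  have := gibbs_le (p := 1) ht one_pos
  simpa using this

lemma hfun_small (c : ℝ) : ∃ T : ℝ, 0 < T ∧ ∀ t, T ≤ t → t + negMulLog t < c := by
  refine ⟨max (Real.exp 2) (|c| + 1), lt_of_lt_of_le (Real.exp_pos 2) (le_max_left _ _), ?_⟩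
  intro t ht
  have h1 : Real.exp 2 ≤ t := le_trans (le_max_left _ _) ht
  have h2 : |c| + 1 ≤ t := le_trans (le_max_right _ _) ht
  have ht0 : 0 < t := lt_of_lt_of_le (Real.exp_pos 2) h1
  have hlog : (2 : ℝ) ≤ Real.log t := by
    rw [show (2:ℝ) = Real.log (Real.exp 2) from (Real.log_exp 2).symm]
    exact Real.log_le_log (Real.exp_pos 2) h1
  have : t + negMulLog t ≤ -t := by
    rw [negMulLog]
    nlinarith
  have hc : -t < c := by
    have : |c| + 1 ≤ t := h2
    cases abs_cases c with
    | inl h => nlinarith [h.1]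
    | inr h => nlinarith [h.1]
  linarith

/-- superlevel sets of the entropy within the nonnegative orthant are compact. -/
lemma isCompact_superlevel (c : ℝ) :
    IsCompact {p : Fin m → ℝ | (∀ i, 0 ≤ p i) ∧ c ≤ ent p} := by
  obtain ⟨T, hT0, hT⟩ := hfun_small (c - m)
  apply Metric.isCompact_of_isClosed_isBounded
  · exact isClosed_nonneg.inter (isClosed_le continuous_const continuous_ent)
  · rw [Metric.isBounded_iff_subset_closedBall 0]
    refine ⟨T, fun p hp => ?_⟩
    obtain ⟨hp0, hpc⟩ := hp
    rw [Metric.mem_closedBall, dist_zero_right]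
    rw [pi_norm_le_iff_of_nonneg hT0.le]
    intro i
    rw [Real.norm_eq_abs, abs_of_nonneg (hp0 i)]
    by_contra hlt
    push_neg at hlt
    have hterm : p i + negMulLog (p i) < c - m := hT _ hlt.le
    have hrest : ∀ j : Fin m, p j + negMulLog (p j) ≤ 1 := fun j => hfun_le_one (hp0 j)
    have : ent p < c := by
      have hsplit : ent p = (p i + negMulLog (p i)) +
          ∑ j ∈ Finset.univ.erase i, (p j + negMulLog (p j)) := by
        rw [ent, ← Finset.add_sum_erase _ _ (Finset.mem_univ i)]
      have hb : ∑ j ∈ Finset.univ.erase i, (p j + negMulLog (p j)) ≤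
          (Finset.univ.erase i).card • (1:ℝ) :=
        Finset.sum_le_card_nsmul _ _ 1 fun j _ => hrest j
      have hcard : ((Finset.univ.erase i).card : ℝ) ≤ m := by
        have := Finset.card_erase_le (a := i) (s := (Finset.univ : Finset (Fin m)))
        have h2 : (Finset.univ : Finset (Fin m)).card = m := Finset.card_univ.trans (Fintype.card_fin m)
        calc ((Finset.univ.erase i).card : ℝ) ≤ ((Finset.univ : Finset (Fin m)).card : ℝ) := by exact_mod_cast this
          _ = m := by exact_mod_cast h2
      rw [hsplit]
      simp only [nsmul_eq_mul, mul_one] at hb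
      linarith
    linarith

lemma isClosed_fib (A : Fin m → Fin n → ℝ) (y : Fin n → ℝ) : IsClosed (fib A y) :=
  isClosed_nonneg.inter (isClosed_eq (continuous_lmap A) continuous_const)

/-- linearity facts. -/
lemma lmap_add (A : Fin m → Fin n → ℝ) (p q : Fin m → ℝ) :
    lmap A (p + q) = lmap A p + lmap A q := by
  funext j
  simp only [lmap_apply, Pi.add_apply, add_mul, Finset.sum_add_distrib]

lemma lmap_smul (A : Fin m → Fin n → ℝ) (c : ℝ) (p : Fin m → ℝ) :
    lmap A (c • p) = c • lmap A p := by
  funext j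
  simp only [lmap_apply, Pi.smul_apply, smul_eq_mul, Finset.mul_sum]
  congr 1; funext i; ring

/-- existence of an entropy maximizer on a nonempty fiber. -/
lemma exists_max (A : Fin m → Fin n → ℝ) (y : Fin n → ℝ) (hne : (fib A y).Nonempty) :
    ∃ x ∈ fib A y, ∀ q ∈ fib A y, ent q ≤ ent x := by
  obtain ⟨c0, hc0⟩ := hne
  set K : Set (Fin m → ℝ) := fib A y ∩ {p | (∀ i, 0 ≤ p i) ∧ ent c0 ≤ ent p} with hK
  have hKc : IsCompact K := (isCompact_superlevel (ent c0)).of_isClosed_subset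
    ((isClosed_fib A y).inter (isClosed_nonneg.inter
      (isClosed_le continuous_const continuous_ent))) Set.inter_subset_right
  have hKne : K.Nonempty := ⟨c0, hc0, hc0.1, le_refl _⟩
  obtain ⟨x, hxK, hxmax⟩ := hKc.exists_isMaxOn hKne continuous_ent.continuousOn
  refine ⟨x, hxK.1, fun q hq => ?_⟩
  by_cases h : ent c0 ≤ ent q
  · exact hxmax ⟨hq, hq.1, h⟩
  · push_neg at h
    exact h.le.trans (hxmax ⟨hc0, hc0.1, le_refl _⟩)

/-- strict concavity of the entropy summand, at midpoints. -/
lemma hfun_midpoint {a b : ℝ} (ha : 0 ≤ a) (hb : 0 ≤ b) :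
    (a + negMulLog a + (b + negMulLog b)) / 2 ≤ (a + b) / 2 + negMulLog ((a + b) / 2) := by
  have := Real.concaveOn_negMulLog.2 (Set.mem_Ici.mpr ha) (Set.mem_Ici.mpr hb)
    (by norm_num : (0:ℝ) ≤ 1/2) (by norm_num : (0:ℝ) ≤ 1/2) (by norm_num)
  simp only [smul_eq_mul] at this
  have h2 : (1:ℝ)/2 * a + 1/2 * b = (a+b)/2 := by ring
  rw [h2] at this
  linarith

lemma hfun_midpoint_lt {a b : ℝ} (ha : 0 ≤ a) (hb : 0 ≤ b) (hab : a ≠ b) :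
    (a + negMulLog a + (b + negMulLog b)) / 2 < (a + b) / 2 + negMulLog ((a + b) / 2) := by
  have := Real.strictConcaveOn_negMulLog.2 (Set.mem_Ici.mpr ha) (Set.mem_Ici.mpr hb) hab
    (by norm_num : (0:ℝ) < 1/2) (by norm_num : (0:ℝ) < 1/2) (by norm_num)
  simp only [smul_eq_mul] at this
  have h2 : (1:ℝ)/2 * a + 1/2 * b = (a+b)/2 := by ring
  rw [h2] at this
  linarith

/-- uniqueness of the entropy maximizer. -/
lemma max_unique (A : Fin m → Fin n → ℝ) (y : Fin n → ℝ) {x₁ x₂ : Fin m → ℝ}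
    (h₁ : x₁ ∈ fib A y) (h₂ : x₂ ∈ fib A y)
    (hm₁ : ∀ q ∈ fib A y, ent q ≤ ent x₁) (hm₂ : ∀ q ∈ fib A y, ent q ≤ ent x₂) :
    x₁ = x₂ := by
  by_contra hne
  obtain ⟨i0, hi0⟩ : ∃ i, x₁ i ≠ x₂ i := by
    by_contra hc; push_neg at hc; exact hne (funext hc)
  set mid : Fin m → ℝ := fun i => (x₁ i + x₂ i) / 2 with hmid
  have hmidfib : mid ∈ fib A y := by
    constructor
    · intro i
      have := h₁.1 i; have := h₂.1 i
      simp only [hmid]; positivity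
    · have : mid = (1/2 : ℝ) • x₁ + (1/2 : ℝ) • x₂ := by
        funext i; simp [hmid]; ring
      rw [this, lmap_add, lmap_smul, lmap_smul, h₁.2, h₂.2]
      funext j; simp; ring
  have heq : ent x₁ = ent x₂ := le_antisymm (hm₂ _ h₁) (hm₁ _ h₂)
  have hlt : (ent x₁ + ent x₂) / 2 < ent mid := by
    rw [ent_def, ent_def, ent_def]
    rw [← Finset.sum_add_distrib, Finset.sum_div]
    refine Finset.sum_lt_sum (fun i _ => hfun_midpoint (h₁.1 i) (h₂.1 i))
      ⟨i0, Finset.mem_univ _, hfun_midpoint_lt (h₁.1 i0) (h₂.1 i0) hi0⟩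
  have := hm₁ _ hmidfib
  rw [heq] at hlt
  simp only [add_self_div_two] at hlt
  linarith

lemma concave_ineq {aa bb t : ℝ} (ha : 0 ≤ aa) (hb : 0 ≤ bb) (ht0 : 0 ≤ t) (ht1 : t ≤ 1) :
    (aa + negMulLog aa) + t * ((bb + negMulLog bb) - (aa + negMulLog aa)) ≤
      ((1 - t) * aa + t * bb) + negMulLog ((1 - t) * aa + t * bb) := by
  have := Real.concaveOn_negMulLog.2 (Set.mem_Ici.mpr ha) (Set.mem_Ici.mpr hb)
    (by linarith : (0:ℝ) ≤ 1 - t) ht0 (by ring)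
  simp only [smul_eq_mul] at this
  nlinarith [this]

lemma max_pos (A : Fin m → Fin n → ℝ) (y : Fin n → ℝ) {x p : Fin m → ℝ}
    (hx : x ∈ fib A y) (hmax : ∀ q ∈ fib A y, ent q ≤ ent x)
    (hp : p ∈ fib A y) (hppos : ∀ i, 0 < p i) : ∀ i, 0 < x i := by
  by_contra hc
  push_neg at hc
  obtain ⟨i0, hi0⟩ := hc
  have hxi0 : x i0 = 0 := le_antisymm hi0 (hx.1 i0)
  classical
  set Z : Finset (Fin m) := Finset.univ.filter (fun i => x i = 0) with hZ
  have hi0Z : i0 ∈ Z := by simp [hZ, hxi0]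
  have hZmem : ∀ i ∈ Z, x i = 0 := fun i hi => (Finset.mem_filter.mp hi).2
  set c2 : ℝ := ∑ i ∈ Z, p i with hc2
  have hc2pos : 0 < c2 := by
    have h1 := Finset.single_le_sum (f := p) (fun i _ => (hppos i).le) hi0Z
    linarith [hppos i0]
  set a : ℝ := ∑ i ∈ Z, (p i + negMulLog (p i)) with ha
  set b : ℝ := ∑ i ∈ Zᶜ, ((p i + negMulLog (p i)) - (x i + negMulLog (x i))) with hb
  set c1 : ℝ := a + b with hc1
  set t : ℝ := Real.exp (-((|c1| + 1) / c2)) with htdef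
  have ht0 : 0 < t := Real.exp_pos _
  have ht1 : t ≤ 1 := by
    rw [htdef]
    apply Real.exp_le_one_iff.mpr
    have : 0 ≤ (|c1| + 1) / c2 := by positivity
    linarith
  have hlogt : Real.log t = -((|c1| + 1) / c2) := by rw [htdef, Real.log_exp]
  set q : Fin m → ℝ := fun i => (1 - t) * x i + t * p i with hq
  have hqfib : q ∈ fib A y := by
    constructor
    · intro i
      have h1 := hx.1 i; have h2 := (hppos i).le
      have : 0 ≤ 1 - t := by linarith
      positivity
    · have hqe : q = (1 - t) • x + t • p := by funext i; simp [hq]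
      rw [hqe, lmap_add, lmap_smul, lmap_smul, hx.2, hp.2]
      funext j; simp; ring
  -- identity on Z
  have hZid : ∀ i ∈ Z, q i + negMulLog (q i)
      = t * (p i + negMulLog (p i)) + (-(t * Real.log t)) * p i := by
    intro i hi
    have hxi : x i = 0 := hZmem i hi
    have hqi : q i = t * p i := by simp [hq, hxi]
    rw [hqi, negMulLog_mul]
    rw [negMulLog]
    ring
  -- zero on Z for x
  have hZx : ∀ i ∈ Z, x i + negMulLog (x i) = 0 := by
    intro i hi; rw [hZmem i hi]; simp
  -- splitting of the entropies
  have splitq : ent q = ∑ i ∈ Z, (q i + negMulLog (q i)) + ∑ i ∈ Zᶜ, (q i + negMulLog (q i)) := by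
    rw [ent_def]; exact (Finset.sum_add_sum_compl Z _).symm
  have splitx : ent x = ∑ i ∈ Z, (x i + negMulLog (x i)) + ∑ i ∈ Zᶜ, (x i + negMulLog (x i)) := by
    rw [ent_def]; exact (Finset.sum_add_sum_compl Z _).symm
  have hZsum : ∑ i ∈ Z, (q i + negMulLog (q i)) = t * a + (-(t * Real.log t)) * c2 := by
    rw [Finset.sum_congr rfl hZid, Finset.sum_add_distrib, ← Finset.mul_sum, ← Finset.mul_sum,
      ← ha, ← hc2]
  have hZxsum : ∑ i ∈ Z, (x i + negMulLog (x i)) = 0 :=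
    Finset.sum_eq_zero hZx
  have hZcsum : ∑ i ∈ Zᶜ, (x i + negMulLog (x i)) + t * b ≤ ∑ i ∈ Zᶜ, (q i + negMulLog (q i)) := by
    rw [hb, Finset.mul_sum, ← Finset.sum_add_distrib]
    exact Finset.sum_le_sum fun i _ => concave_ineq (hx.1 i) (hppos i).le ht0.le ht1
  have hkey : (-Real.log t) * c2 = |c1| + 1 := by
    rw [hlogt]; field_simp
  have hqx : ent x + t ≤ ent q := by
    have h1 : ent q ≥ t * a + (-(t * Real.log t)) * c2
        + (∑ i ∈ Zᶜ, (x i + negMulLog (x i)) + t * b) := by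
      rw [splitq, hZsum]; linarith
    have h2 : (-(t * Real.log t)) * c2 = t * (|c1| + 1) := by
      have : (-(t * Real.log t)) * c2 = t * ((-Real.log t) * c2) := by ring
      rw [this, hkey]
    rw [splitx, hZxsum]
    have habs : c1 + |c1| + 1 ≥ 1 := by cases abs_cases c1 with
      | inl h => linarith [h.1]
      | inr h => linarith [h.1]
    have h3 : t * a + t * b + t * (|c1| + 1) ≥ t := by
      have : t * a + t * b + t * (|c1| + 1) = t * (c1 + |c1| + 1) := by rw [hc1]; ring
      rw [this]
      nlinarith
    linarith
  have := hmax q hqfib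
  linarith [ht0]

lemma orth_repr (A : Fin m → Fin n → ℝ) (u : Fin m → ℝ)
    (hu : ∀ d : Fin m → ℝ, (∀ j, ∑ i, d i * A i j = 0) → ∑ i, u i * d i = 0) :
    ∃ v : Fin n → ℝ, ∀ i, u i = ∑ j, A i j * v j := by
  classical
  let M : (Fin n → ℝ) →ₗ[ℝ] EuclideanSpace ℝ (Fin m) :=
    { toFun := fun v => WithLp.toLp 2 (fun i => ∑ j, A i j * v j : Fin m → ℝ)
      map_add' := by
        intro v w
        ext i
        simp [Pi.add_apply, mul_add, Finset.sum_add_distrib]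
      map_smul' := by
        intro c v
        ext i
        simp [Finset.mul_sum]
        congr 1; funext j; ring }
  let V : Submodule ℝ (EuclideanSpace ℝ (Fin m)) := LinearMap.range M
  haveI : FiniteDimensional ℝ (EuclideanSpace ℝ (Fin m)) := by infer_instance
  haveI : CompleteSpace V := FiniteDimensional.complete ℝ V
  let u' : EuclideanSpace ℝ (Fin m) := WithLp.toLp 2 u
  obtain ⟨xx, hxV, z, hzV, huxz⟩ := V.exists_add_mem_mem_orthogonal u'
  have hzker : ∀ j, ∑ i, (z : Fin m → ℝ) i * A i j = 0 := by
    intro j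
    have hmem : M (Pi.single j 1) ∈ V := ⟨Pi.single j 1, rfl⟩
    have hinner := (Submodule.mem_orthogonal V z).mp hzV (M (Pi.single j 1)) hmem
    rw [PiLp.inner_apply] at hinner
    simp only [RCLike.inner_apply, conj_trivial] at hinner
    have hMj : ∀ i, (M (Pi.single j 1) : Fin m → ℝ) i = A i j := by
      intro i
      show (∑ j', A i j' * (Pi.single j (1:ℝ) : Fin n → ℝ) j') = A i j
      rw [Finset.sum_eq_single j]
      · simp
      · intro b _ hb; simp [Pi.single_apply, hb]
      · intro hj; exact absurd (Finset.mem_univ j) hj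
    calc ∑ i, (z : Fin m → ℝ) i * A i j
        = ∑ i, (M (Pi.single j 1) : Fin m → ℝ) i * (z : Fin m → ℝ) i := by
          refine Finset.sum_congr rfl fun i _ => ?_; rw [hMj i]; ring
      _ = 0 := (Finset.sum_congr rfl fun i _ => mul_comm _ _).trans hinner
  have h0 : ∑ i, u i * (z : Fin m → ℝ) i = 0 := hu _ hzker
  have hxz : ∑ i, (xx : Fin m → ℝ) i * (z : Fin m → ℝ) i = 0 := by
    have hinner := (Submodule.mem_orthogonal V z).mp hzV xx hxV
    rw [PiLp.inner_apply] at hinner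
    simpa [mul_comm] using hinner
  have hz0 : ∀ i, (z : Fin m → ℝ) i = 0 := by
    have hsum : ∑ i, (z : Fin m → ℝ) i * (z : Fin m → ℝ) i = 0 := by
      have hui : ∀ i, u i = (xx : Fin m → ℝ) i + (z : Fin m → ℝ) i := by
        intro i
        have := congrArg (fun w : EuclideanSpace ℝ (Fin m) => w i) huxz
        exact this
      have : ∑ i, u i * (z : Fin m → ℝ) i
          = ∑ i, (xx : Fin m → ℝ) i * (z : Fin m → ℝ) i
            + ∑ i, (z : Fin m → ℝ) i * (z : Fin m → ℝ) i := by
        rw [← Finset.sum_add_distrib]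
        refine Finset.sum_congr rfl fun i _ => ?_
        rw [hui i]; ring
      rw [h0, hxz] at this
      linarith
    intro i
    have hle : ∀ i ∈ Finset.univ (α := Fin m), 0 ≤ (z : Fin m → ℝ) i * (z : Fin m → ℝ) i :=
      fun i _ => mul_self_nonneg _
    have := (Finset.sum_eq_zero_iff_of_nonneg hle).mp hsum i (Finset.mem_univ i)
    nlinarith [this]
  obtain ⟨v, hv⟩ := hxV
  refine ⟨v, fun i => ?_⟩
  have h1 : u i = (xx : Fin m → ℝ) i + (z : Fin m → ℝ) i := congrArg (fun w : EuclideanSpace ℝ (Fin m) => w i) huxz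
  rw [h1, hz0 i, add_zero, ← hv]
  rfl

lemma intmax_torus (A : Fin m → Fin n → ℝ) (y : Fin n → ℝ) {x : Fin m → ℝ}
    (hx : x ∈ fib A y) (hmax : ∀ q ∈ fib A y, ent q ≤ ent x)
    (hxpos : ∀ i, 0 < x i) : ∃ v, x = emap A v := by
  have hu : ∀ d : Fin m → ℝ, (∀ j, ∑ i, d i * A i j = 0) →
      ∑ i, (fun i => -Real.log (x i)) i * d i = 0 := by
    intro d hd
    set g : ℝ → ℝ := fun t => ∑ i, ((x i + t * d i) + negMulLog (x i + t * d i)) with hg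
    have hderiv : HasDerivAt g (∑ i, (d i + (-Real.log (x i) - 1) * d i)) 0 := by
      apply HasDerivAt.fun_sum
      intro i _
      have hlin : HasDerivAt (fun t : ℝ => x i + t * d i) (d i) 0 :=
        (hasDerivAt_mul_const (d i)).const_add (x i)
      have hne : x i + 0 * d i ≠ 0 := by simpa using (hxpos i).ne'
      have hcomp : HasDerivAt (fun t : ℝ => negMulLog (x i + t * d i))
          ((-Real.log (x i + 0 * d i) - 1) * d i) 0 :=
        by have := (Real.hasDerivAt_negMulLog hne).comp 0 hlin; exact this
      simp only [zero_mul, add_zero] at hcomp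
      exact hlin.add hcomp
    have hlocmax : IsLocalMax g 0 := by
      have hev : ∀ᶠ t in nhds (0 : ℝ), ∀ i, 0 ≤ x i + t * d i := by
        rw [Filter.eventually_all]
        intro i
        have hcont : Continuous (fun t : ℝ => x i + t * d i) :=
          continuous_const.add (continuous_id.mul continuous_const)
        have h0 : (0:ℝ) < x i + 0 * d i := by simpa using hxpos i
        exact (hcont.tendsto 0).eventually (eventually_ge_nhds h0)
      filter_upwards [hev] with t ht
      have hpt : (fun i => x i + t * d i) ∈ fib A y := by
        refine ⟨ht, funext fun j => ?_⟩
        rw [lmap_apply]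
        have h1 : ∑ i, (x i + t * d i) * A i j
            = ∑ i, x i * A i j + t * ∑ i, d i * A i j := by
          rw [Finset.mul_sum, ← Finset.sum_add_distrib]
          refine Finset.sum_congr rfl fun i _ => ?_; ring
        rw [h1, hd j, mul_zero, add_zero, ← lmap_apply, hx.2]
      have h2 : g t = ent (fun i => x i + t * d i) := by rw [hg, ent_def]
      have h3 : g 0 = ent x := by rw [hg, ent_def]; simp
      rw [h2, h3]
      exact hmax _ hpt
    have hD := hlocmax.hasDerivAt_eq_zero hderiv
    rw [← hD]
    refine Finset.sum_congr rfl fun i _ => ?_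
    ring
  obtain ⟨v, hv⟩ := orth_repr A (fun i => -Real.log (x i)) hu
  refine ⟨v, funext fun i => ?_⟩
  have : Real.log (x i) = -(∑ j, A i j * v j) := by
    have := hv i; linarith
  rw [show emap A v i = Real.exp (-(∑ j, A i j * v j)) from rfl, ← this,
    Real.exp_log (hxpos i)]

/-- an entropy maximizer lies in the closure of the torus orbit. -/
lemma max_mem_closure (A : Fin m → Fin n → ℝ) (y : Fin n → ℝ) {x : Fin m → ℝ}
    (hx : x ∈ fib A y) (hmax : ∀ q ∈ fib A y, ent q ≤ ent x) :
    x ∈ closure (Set.range (emap A)) := by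
  classical
  set pk : ℕ → Fin m → ℝ := fun k i => x i + ((k : ℝ) + 1)⁻¹ with hpk
  have hpkpos : ∀ k i, 0 < pk k i := by
    intro k i
    have := hx.1 i
    have h2 : (0:ℝ) < ((k:ℝ)+1)⁻¹ := by positivity
    simp only [hpk]; linarith
  set yk : ℕ → Fin n → ℝ := fun k => lmap A (pk k) with hyk
  have hpkfib : ∀ k, pk k ∈ fib A (yk k) := fun k => ⟨fun i => (hpkpos k i).le, rfl⟩
  have hex : ∀ k, ∃ z, z ∈ fib A (yk k) ∧ ∀ q ∈ fib A (yk k), ent q ≤ ent z := by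
    intro k
    obtain ⟨z, hz1, hz2⟩ := exists_max A (yk k) ⟨pk k, hpkfib k⟩
    exact ⟨z, hz1, hz2⟩
  choose xk hxkfib hxkmax using hex
  have hxkpos : ∀ k i, 0 < xk k i := fun k =>
    max_pos A (yk k) (hxkfib k) (hxkmax k) (hpkfib k) (hpkpos k)
  have hxkrange : ∀ k, xk k ∈ Set.range (emap A) := by
    intro k
    obtain ⟨v, hv⟩ := intmax_torus A (yk k) (hxkfib k) (hxkmax k) (hxkpos k)
    exact ⟨v, hv.symm⟩
  -- pk → x
  have hpkx : Tendsto pk atTop (nhds x) := by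
    rw [tendsto_pi_nhds]
    intro i
    have : Tendsto (fun k : ℕ => ((k:ℝ)+1)⁻¹) atTop (nhds 0) := tendsto_one_div_add_atTop_nhds_zero_nat.congr (by intro k; rw [one_div])
    have h2 := this.const_add (x i)
    simpa using h2
  have hykx : Tendsto yk atTop (nhds y) := by
    have := (continuous_lmap A).tendsto x
    have h2 := this.comp hpkx
    rwa [hx.2] at h2
  have hentpk : Tendsto (fun k => ent (pk k)) atTop (nhds (ent x)) :=
    (continuous_ent.tendsto x).comp hpkx
  obtain ⟨B, hB⟩ : ∃ B, ∀ k, B ≤ ent (pk k) := by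
    obtain ⟨B, hB⟩ := hentpk.bddBelow_range
    exact ⟨B, fun k => hB (Set.mem_range_self k)⟩
  have hxkS : ∀ k, xk k ∈ {p : Fin m → ℝ | (∀ i, 0 ≤ p i) ∧ B ≤ ent p} := by
    intro k
    exact ⟨(hxkfib k).1, le_trans (hB k) (hxkmax k _ (hpkfib k))⟩
  -- xk → x via subsequences
  have hxkx : Tendsto xk atTop (nhds x) := by
    apply tendsto_of_subseq_tendsto
    intro ns hns
    obtain ⟨x', hx'S, ms, hms, hlim⟩ :=
      (isCompact_superlevel B).tendsto_subseq (x := fun j => xk (ns j)) (fun j => hxkS (ns j))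
    refine ⟨ms, ?_⟩
    have hcomp : Tendsto (fun j => ns (ms j)) atTop atTop := hns.comp hms.tendsto_atTop
    -- x' ∈ fib A y
    have hlx' : lmap A x' = y := by
      have h1 : Tendsto (fun j => lmap A (xk (ns (ms j)))) atTop (nhds (lmap A x')) :=
        ((continuous_lmap A).tendsto x').comp hlim
      have h2 : Tendsto (fun j => lmap A (xk (ns (ms j)))) atTop (nhds y) := by
        have h3 : ∀ j, lmap A (xk (ns (ms j))) = yk (ns (ms j)) := fun j => (hxkfib _).2
        rw [show (fun j => lmap A (xk (ns (ms j)))) = fun j => yk (ns (ms j)) from funext h3]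
        exact hykx.comp hcomp
      exact tendsto_nhds_unique h1 h2
    have hx'fib : x' ∈ fib A y := ⟨hx'S.1, hlx'⟩
    have hentx' : ent x ≤ ent x' := by
      have h1 : Tendsto (fun j => ent (xk (ns (ms j)))) atTop (nhds (ent x')) :=
        (continuous_ent.tendsto x').comp hlim
      have h2 : Tendsto (fun j => ent (pk (ns (ms j)))) atTop (nhds (ent x)) :=
        hentpk.comp hcomp
      exact le_of_tendsto_of_tendsto' h2 h1 fun j => hxkmax _ _ (hpkfib _)
    have hx'max : ∀ q ∈ fib A y, ent q ≤ ent x' := fun q hq =>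
      le_trans (hmax q hq) hentx'
    have : x' = x := max_unique A y hx'fib hx hx'max hmax
    rw [this] at hlim
    exact hlim
  exact mem_closure_of_tendsto hxkx (Eventually.of_forall hxkrange)

lemma lmap_sub (A : Fin m → Fin n → ℝ) (p q : Fin m → ℝ) :
    lmap A (p - q) = lmap A p - lmap A q := by
  have h1 : p - q = p + (-1 : ℝ) • q := by funext i; simp; ring
  rw [h1, lmap_add, lmap_smul]
  funext j; simp; ring

/-- positive lower bound for the positive coordinates of a vector. -/
lemma exists_pos_lb (w : Fin m → ℝ) : ∃ μ : ℝ, 0 < μ ∧ ∀ i, 0 < w i → μ ≤ w i := by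
  classical
  by_cases h : (Finset.univ.filter fun i => 0 < w i).Nonempty
  · obtain ⟨i0, hi0mem, hi0min⟩ := Finset.exists_min_image _ w h
    refine ⟨w i0, (Finset.mem_filter.mp hi0mem).2, fun i hi => ?_⟩
    exact hi0min i (Finset.mem_filter.mpr ⟨Finset.mem_univ i, hi⟩)
  · exact ⟨1, one_pos, fun i hi => absurd ⟨i, Finset.mem_filter.mpr ⟨Finset.mem_univ i, hi⟩⟩ h⟩

noncomputable def nsq (p : Fin m → ℝ) : ℝ := ∑ i, p i ^ 2

lemma continuous_nsq : Continuous (nsq (m := m)) :=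
  continuous_finset_sum _ fun i _ => (continuous_apply i).pow 2

/-- existence of a minimal-square-norm point in a nonempty fiber. -/
lemma exists_min_nsq (A : Fin m → Fin n → ℝ) (y : Fin n → ℝ) (hne : (fib A y).Nonempty) :
    ∃ c ∈ fib A y, ∀ q ∈ fib A y, nsq c ≤ nsq q := by
  obtain ⟨c0, hc0⟩ := hne
  set K : Set (Fin m → ℝ) := fib A y ∩ {p | nsq p ≤ nsq c0} with hK
  have hKclosed : IsClosed K :=
    (isClosed_fib A y).inter (isClosed_le continuous_nsq continuous_const)
  have hKbdd : Bornology.IsBounded K := by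
    rw [Metric.isBounded_iff_subset_closedBall 0]
    refine ⟨Real.sqrt (nsq c0), fun p hp => ?_⟩
    rw [Metric.mem_closedBall, dist_zero_right]
    have h0 : 0 ≤ Real.sqrt (nsq c0) := Real.sqrt_nonneg _
    rw [pi_norm_le_iff_of_nonneg h0]
    intro i
    rw [Real.norm_eq_abs]
    have h1 : p i ^ 2 ≤ nsq c0 := by
      have h2 : p i ^ 2 ≤ nsq p :=
        Finset.single_le_sum (f := fun i => p i ^ 2) (fun i _ => sq_nonneg _) (Finset.mem_univ i)
      exact h2.trans hp.2
    have := Real.sqrt_le_sqrt h1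
    rwa [Real.sqrt_sq_eq_abs] at this
  have hKcomp : IsCompact K := Metric.isCompact_of_isClosed_isBounded hKclosed hKbdd
  have hKne : K.Nonempty := ⟨c0, hc0, show nsq c0 ≤ nsq c0 from le_rfl⟩
  obtain ⟨c, hcK, hcmin⟩ := hKcomp.exists_isMinOn hKne continuous_nsq.continuousOn
  refine ⟨c, hcK.1, fun q hq => ?_⟩
  by_cases h : nsq q ≤ nsq c0
  · exact hcmin ⟨hq, h⟩
  · push_neg at h
    exact le_trans (hcmin ⟨hc0, show nsq c0 ≤ nsq c0 from le_rfl⟩) h.le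

/-- uniform boundedness of minimal selections from fibers over a bounded set. -/
lemma bounded_selection (A : Fin m → Fin n → ℝ) (K : ℝ) :
    ∃ R : ℝ, ∀ y : Fin n → ℝ, (fib A y).Nonempty → ‖y‖ ≤ K →
      ∃ c ∈ fib A y, ‖c‖ ≤ R := by
  by_contra hcon
  push_neg at hcon
  have hseq : ∀ k : ℕ, ∃ y : Fin n → ℝ, (fib A y).Nonempty ∧ ‖y‖ ≤ K ∧
      ∀ c ∈ fib A y, (k : ℝ) < ‖c‖ := fun k => hcon (k : ℝ)
  choose ys hysne hysK hysbig using hseq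
  have hmk : ∀ k : ℕ, ∃ c ∈ fib A (ys k), ∀ q ∈ fib A (ys k), nsq c ≤ nsq q :=
    fun k => exists_min_nsq A (ys k) (hysne k)
  choose mk hmkfib hmkmin using hmk
  have hmkbig : ∀ k : ℕ, (k : ℝ) < ‖mk k‖ := fun k => hysbig k (mk k) (hmkfib k)
  have hmkpos : ∀ k : ℕ, 0 < ‖mk k‖ := fun k =>
    lt_of_le_of_lt (Nat.cast_nonneg k) (hmkbig k)
  set um : ℕ → Fin m → ℝ := fun k => (‖mk k‖)⁻¹ • mk k with hum
  have humnorm : ∀ k, ‖um k‖ = 1 := by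
    intro k
    rw [hum]
    simp only [norm_smul, norm_inv, norm_norm]
    exact inv_mul_cancel₀ (hmkpos k).ne'
  have humnn : ∀ k i, 0 ≤ um k i := by
    intro k i
    have := (hmkfib k).1 i
    have h2 := (hmkpos k).le
    simp only [hum, Pi.smul_apply, smul_eq_mul]
    positivity
  set T : Set (Fin m → ℝ) := {p | ‖p‖ = 1 ∧ ∀ i, 0 ≤ p i} with hT
  have hTcomp : IsCompact T := by
    apply Metric.isCompact_of_isClosed_isBounded
    · have hrw : T = {p : Fin m → ℝ | ‖p‖ = 1} ∩ {p : Fin m → ℝ | ∀ i, 0 ≤ p i} := by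
        rw [hT, Set.setOf_and]
      rw [hrw]
      apply IsClosed.inter
      · exact isClosed_eq continuous_norm continuous_const
      · have h : {p : Fin m → ℝ | ∀ i, 0 ≤ p i} = ⋂ i, {p | 0 ≤ p i} := by
          ext p; simp [Set.mem_iInter]
        rw [h]
        exact isClosed_iInter fun i => isClosed_le continuous_const (continuous_apply i)
    · rw [Metric.isBounded_iff_subset_closedBall 0]
      exact ⟨1, fun p hp => by
        rw [Metric.mem_closedBall, dist_zero_right]; exact le_of_eq hp.1⟩
  obtain ⟨u, huT, φ, hφ, hφlim⟩ := hTcomp.tendsto_subseq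
    (x := um) (fun k => ⟨humnorm k, humnn k⟩)
  -- lmap A u = 0
  have hlum : ∀ k, lmap A (um k) = (‖mk k‖)⁻¹ • ys k := by
    intro k
    rw [hum]
    rw [lmap_smul, (hmkfib k).2]
  have hK0 : (0:ℝ) ≤ max K 0 := le_max_right _ _
  have hlu0 : lmap A u = 0 := by
    have h1 : Tendsto (fun j => lmap A (um (φ j))) atTop (nhds (lmap A u)) :=
      ((continuous_lmap A).tendsto u).comp hφlim
    have h2 : Tendsto (fun j => lmap A (um (φ j))) atTop (nhds 0) := by
      rw [tendsto_zero_iff_norm_tendsto_zero]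
      apply squeeze_zero' (g := fun j : ℕ => ((j : ℝ))⁻¹ * max K 0)
        (Eventually.of_forall fun j => norm_nonneg _)
      · rw [eventually_atTop]
        refine ⟨1, fun j hj => ?_⟩
        have hj1 : (1:ℝ) ≤ (j:ℝ) := by exact_mod_cast hj
        rw [hlum (φ j), norm_smul, norm_inv, norm_norm]
        have hphij : (j : ℝ) ≤ ((φ j : ℕ) : ℝ) := by exact_mod_cast hφ.le_apply
        have hbig : (j : ℝ) < ‖mk (φ j)‖ := lt_of_le_of_lt hphij (hmkbig (φ j))
        have hjpos : (0:ℝ) < (j:ℝ) := by linarith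
        have hinv : (‖mk (φ j)‖)⁻¹ ≤ ((j:ℝ))⁻¹ := inv_anti₀ hjpos hbig.le
        have hys : ‖ys (φ j)‖ ≤ max K 0 := le_trans (hysK (φ j)) (le_max_left _ _)
        exact mul_le_mul hinv hys (norm_nonneg _) (by positivity)
      · have h3 : Tendsto (fun j : ℕ => ((j:ℝ))⁻¹) atTop (nhds 0) :=
          tendsto_inv_atTop_zero.comp tendsto_natCast_atTop_atTop
        simpa using h3.mul_const (max K 0)
    exact tendsto_nhds_unique h1 h2
  -- u has a positive coordinate
  have hupos : ∃ i0, 0 < u i0 := by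
    by_contra hcu
    push_neg at hcu
    have hu0 : u = 0 := funext fun i => le_antisymm (hcu i) (huT.2 i)
    have h1 : ‖u‖ = 1 := huT.1
    rw [hu0, norm_zero] at h1
    exact zero_ne_one h1
  obtain ⟨i0, hi0⟩ := hupos
  obtain ⟨μ, hμpos, hμ⟩ := exists_pos_lb u
  set s : ℝ := ∑ i, u i * u i with hs
  have hspos : 0 < s :=
    lt_of_lt_of_le (mul_pos hi0 hi0)
      (Finset.single_le_sum (f := fun i => u i * u i) (fun i _ => mul_self_nonneg _)
        (Finset.mem_univ i0))
  -- dot products converge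
  have hdot : Tendsto (fun j => ∑ i, um (φ j) i * u i) atTop (nhds s) := by
    have hcoord : ∀ i, Tendsto (fun j => um (φ j) i) atTop (nhds (u i)) := by
      intro i
      have := hφlim
      rw [tendsto_pi_nhds] at this
      exact this i
    exact tendsto_finset_sum _ fun i _ => (hcoord i).mul_const (u i)
  -- choose a large index
  have hev1 : ∀ᶠ j in atTop, s / 2 ≤ ∑ i, um (φ j) i * u i :=
    hdot.eventually (eventually_ge_nhds (by linarith))
  have hev2 : ∀ᶠ j in atTop, ‖um (φ j) - u‖ ≤ μ / 2 := by
    have : Tendsto (fun j => um (φ j) - u) atTop (nhds 0) := by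
      simpa using hφlim.sub (tendsto_const_nhds (x := u))
    have hn : Tendsto (fun j => ‖um (φ j) - u‖) atTop (nhds 0) := by
      simpa using this.norm
    exact hn.eventually (eventually_le_nhds (by linarith))
  have hev3 : ∀ᶠ j in atTop, (2:ℝ) ≤ ‖mk (φ j)‖ := by
    rw [eventually_atTop]
    refine ⟨2, fun j hj => ?_⟩
    have h1 : (2:ℝ) ≤ (j:ℝ) := by exact_mod_cast hj
    have h2 : (j : ℝ) ≤ ((φ j : ℕ) : ℝ) := by exact_mod_cast hφ.le_apply
    linarith [hmkbig (φ j)]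
  obtain ⟨J, hJ1, hJ2, hJ3⟩ := (hev1.and (hev2.and hev3)).exists
  set M : Fin m → ℝ := mk (φ J) with hM
  set w : Fin m → ℝ := um (φ J) with hw
  have hMnorm : 0 < ‖M‖ := hmkpos (φ J)
  have hMw : ∀ i, M i = ‖M‖ * w i := by
    intro i
    rw [hw, hum]
    simp only [Pi.smul_apply, smul_eq_mul]
    field_simp
    exact (mul_div_cancel_left₀ _ hMnorm.ne').symm
  set c' : Fin m → ℝ := M - u with hc'
  have hc'fib : c' ∈ fib A (ys (φ J)) := by
    constructor
    · intro i
      rw [hc']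
      simp only [Pi.sub_apply]
      by_cases hui : 0 < u i
      · have h1 : μ ≤ u i := hμ i hui
        have h2 : |w i - u i| ≤ μ / 2 := by
          have := norm_le_pi_norm (w - u) i
          simp only [Pi.sub_apply, Real.norm_eq_abs] at this
          exact this.trans hJ2
        have h3 : u i / 2 ≤ w i := by
          obtain ⟨hl, hr⟩ := abs_le.mp h2
          linarith
        have h4 : ‖M‖ * (u i / 2) ≤ ‖M‖ * w i :=
          mul_le_mul_of_nonneg_left h3 hMnorm.le
        rw [hMw i]
        nlinarith [hJ3]
      · push_neg at hui
        have : u i = 0 := le_antisymm hui (huT.2 i)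
        rw [this, sub_zero]
        exact (hmkfib (φ J)).1 i
    · rw [hc', lmap_sub, (hmkfib (φ J)).2, hlu0, sub_zero]
  have hdec : nsq c' < nsq M := by
    have hexp : nsq c' = nsq M - 2 * (∑ i, M i * u i) + s := by
      rw [hc', nsq, nsq, hs, Finset.mul_sum, ← Finset.sum_sub_distrib,
        ← Finset.sum_add_distrib]
      refine Finset.sum_congr rfl fun i _ => ?_
      simp only [Pi.sub_apply]
      ring
    have hMu : ∑ i, M i * u i = ‖M‖ * ∑ i, w i * u i := by
      rw [Finset.mul_sum]
      exact Finset.sum_congr rfl fun i _ => by rw [hMw i]; ring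
    have h1 : s / 2 ≤ ∑ i, w i * u i := hJ1
    have h2 : ‖M‖ * (s/2) ≤ ‖M‖ * ∑ i, w i * u i := mul_le_mul_of_nonneg_left h1 hMnorm.le
    have h3 : s ≤ ‖M‖ * (s/2) := by nlinarith [hJ3]
    rw [hexp, hMu]
    nlinarith
  exact absurd (hmkmin (φ J) c' hc'fib) (not_le.mpr hdec)

/-- lower hemicontinuity of fibers, along a subsequence. -/
lemma lhc (A : Fin m → Fin n → ℝ) {y : Fin n → ℝ} {q : Fin m → ℝ} (hq : q ∈ fib A y)
    {ys : ℕ → Fin n → ℝ} (hysne : ∀ k, (fib A (ys k)).Nonempty)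
    (hys : Tendsto ys atTop (nhds y)) :
    ∃ φ : ℕ → ℕ, StrictMono φ ∧ ∃ qs : ℕ → Fin m → ℝ,
      (∀ k, qs k ∈ fib A (ys (φ k))) ∧ Tendsto qs atTop (nhds q) := by
  classical
  obtain ⟨K, hK⟩ : ∃ K, ∀ k, ‖ys k‖ ≤ K := by
    obtain ⟨K, hK⟩ := hys.norm.bddAbove_range
    exact ⟨K, fun k => hK (Set.mem_range_self k)⟩
  obtain ⟨R, hR⟩ := bounded_selection A K
  have hcs : ∀ k, ∃ c ∈ fib A (ys k), ‖c‖ ≤ R := fun k => hR (ys k) (hysne k) (hK k)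
  choose cs hcsfib hcsR using hcs
  set T : Set (Fin m → ℝ) := {p | ‖p‖ ≤ R ∧ ∀ i, 0 ≤ p i} with hT
  have hTcomp : IsCompact T := by
    apply Metric.isCompact_of_isClosed_isBounded
    · have hrw : T = {p : Fin m → ℝ | ‖p‖ ≤ R} ∩ {p : Fin m → ℝ | ∀ i, 0 ≤ p i} := by
        rw [hT, Set.setOf_and]
      rw [hrw]
      apply IsClosed.inter
      · exact isClosed_le continuous_norm continuous_const
      · have h : {p : Fin m → ℝ | ∀ i, 0 ≤ p i} = ⋂ i, {p | 0 ≤ p i} := by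
          ext p; simp [Set.mem_iInter]
        rw [h]
        exact isClosed_iInter fun i => isClosed_le continuous_const (continuous_apply i)
    · rw [Metric.isBounded_iff_subset_closedBall 0]
      exact ⟨R, fun p hp => by rw [Metric.mem_closedBall, dist_zero_right]; exact hp.1⟩
  obtain ⟨cinf, hcinfT, φ, hφ, hφlim⟩ := hTcomp.tendsto_subseq
    (x := cs) (fun k => ⟨hcsR k, (hcsfib k).1⟩)
  have hcinffib : cinf ∈ fib A y := by
    refine ⟨hcinfT.2, ?_⟩
    have h1 : Tendsto (fun j => lmap A (cs (φ j))) atTop (nhds (lmap A cinf)) :=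
      ((continuous_lmap A).tendsto cinf).comp hφlim
    have h2 : Tendsto (fun j => lmap A (cs (φ j))) atTop (nhds y) := by
      have h3 : ∀ j, lmap A (cs (φ j)) = ys (φ j) := fun j => (hcsfib (φ j)).2
      rw [show (fun j => lmap A (cs (φ j))) = fun j => ys (φ j) from funext h3]
      exact hys.comp hφ.tendsto_atTop
    exact tendsto_nhds_unique h1 h2
  obtain ⟨μ, hμpos, hμ⟩ := exists_pos_lb cinf
  set ε : ℕ → ℝ := fun k => ‖cs (φ k) - cinf‖ with hε
  have hεnn : ∀ k, 0 ≤ ε k := fun k => norm_nonneg _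
  set t : ℕ → ℝ := fun k => min 1 (ε k / μ) with ht
  have ht0 : ∀ k, 0 ≤ t k := fun k => le_min one_pos.le (by positivity)
  have ht1 : ∀ k, t k ≤ 1 := fun k => min_le_left _ _
  set qs : ℕ → Fin m → ℝ :=
    fun k i => (1 - t k) * q i + t k * cinf i + (cs (φ k) i - cinf i) with hqs
  refine ⟨φ, hφ, qs, ?_, ?_⟩
  · intro k
    constructor
    · intro i
      have hcoord : |cs (φ k) i - cinf i| ≤ ε k := by
        have := norm_le_pi_norm (cs (φ k) - cinf) i
        simpa [Real.norm_eq_abs] using this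
      obtain ⟨hcl, hcr⟩ := abs_le.mp hcoord
      by_cases hpos : 0 < cinf i
      · have hμi : μ ≤ cinf i := hμ i hpos
        rcases min_cases 1 (ε k / μ) with ⟨heq, hle⟩ | ⟨heq, hlt⟩
        · -- t k = 1, so 1 ≤ ε k / μ
          have : t k = 1 := heq
          simp only [hqs, this, sub_self, zero_mul, one_mul]
          have := (hcsfib (φ k)).1 i
          linarith
        · -- t k = ε k / μ < 1
          have htk : t k = ε k / μ := heq
          have h1 : 0 ≤ (1 - t k) * q i :=
            mul_nonneg (by linarith [ht1 k]) (hq.1 i)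
          have h2 : ε k ≤ t k * cinf i := by
            rw [htk]
            have h3 : (ε k / μ) * μ ≤ (ε k / μ) * cinf i :=
              mul_le_mul_of_nonneg_left hμi (by positivity)
            rw [div_mul_cancel₀ _ hμpos.ne'] at h3
            exact h3
          simp only [hqs]
          linarith
      · push_neg at hpos
        have hc0 : cinf i = 0 := le_antisymm hpos (hcinfT.2 i)
        simp only [hqs, hc0, mul_zero, sub_zero, add_zero]
        have h1 := hq.1 i
        have h2 := (hcsfib (φ k)).1 i
        have h3 : 0 ≤ (1 - t k) * q i := mul_nonneg (by linarith [ht1 k]) h1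
        linarith
    · have hdecomp : qs k = ((1 - t k) • q + t k • cinf) + (cs (φ k) - cinf) := by
        funext i
        simp only [hqs, Pi.add_apply, Pi.smul_apply, Pi.sub_apply, smul_eq_mul]
      rw [hdecomp, lmap_add, lmap_add, lmap_smul, lmap_smul, lmap_sub,
        hq.2, hcinffib.2, (hcsfib (φ k)).2]
      funext j
      simp only [Pi.add_apply, Pi.sub_apply, Pi.smul_apply, smul_eq_mul]
      ring
  · have hεlim : Tendsto ε atTop (nhds 0) := by
      have : Tendsto (fun k => cs (φ k) - cinf) atTop (nhds 0) := by
        simpa using hφlim.sub (tendsto_const_nhds (x := cinf))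
      simpa [hε] using this.norm
    have htlim : Tendsto t atTop (nhds 0) := by
      apply squeeze_zero ht0 (fun k => min_le_right _ _)
      simpa using hεlim.div_const μ
    rw [tendsto_pi_nhds]
    intro i
    have hclim : Tendsto (fun k => cs (φ k) i) atTop (nhds (cinf i)) := by
      have := hφlim
      rw [tendsto_pi_nhds] at this
      exact this i
    have hgoal : Tendsto (fun k => (1 - t k) * q i + t k * cinf i + (cs (φ k) i - cinf i))
        atTop (nhds ((1 - 0) * q i + 0 * cinf i + (cinf i - cinf i))) := by
      apply Tendsto.add
      · exact (((tendsto_const_nhds (x := (1:ℝ))).sub htlim).mul_const (q i)).add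
          (htlim.mul_const (cinf i))
      · exact hclim.sub tendsto_const_nhds
    simpa using hgoal

lemma toricX_eq (A : Fin m → (Fin n → ℝ)) : toricX A = closure (Set.range (emap A)) := rfl

lemma toricX_nonneg (A : Fin m → (Fin n → ℝ)) {x : Fin m → ℝ} (hx : x ∈ toricX A) :
    ∀ i, 0 ≤ x i := by
  have hsub : Set.range (emap A) ⊆ {p : Fin m → ℝ | ∀ i, 0 ≤ p i} := by
    rintro p ⟨v, rfl⟩
    exact fun i => (emap_pos A v i).le
  have := closure_minimal hsub isClosed_nonneg
  rw [toricX_eq] at hx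
  exact this hx

lemma isClosed_toricX (A : Fin m → (Fin n → ℝ)) : IsClosed (toricX A) := isClosed_closure

/-- every point of the toric variety maximizes entropy in its fiber. -/
lemma X_max (A : Fin m → (Fin n → ℝ)) {x : Fin m → ℝ} (hx : x ∈ toricX A) :
    ∀ q ∈ fib A (lmap A x), ent q ≤ ent x := by
  intro q hq
  rw [toricX_eq, mem_closure_iff_seq_limit] at hx
  obtain ⟨ps, hpsmem, hpslim⟩ := hx
  choose vs hvs using hpsmem
  set ys : ℕ → Fin n → ℝ := fun k => lmap A (ps k) with hys
  have hysne : ∀ k, (fib A (ys k)).Nonempty := by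
    intro k
    refine ⟨ps k, fun i => ?_, rfl⟩
    rw [← hvs k]; exact (emap_pos A (vs k) i).le
  have hyslim : Tendsto ys atTop (nhds (lmap A x)) :=
    ((continuous_lmap A).tendsto x).comp hpslim
  obtain ⟨φ, hφ, qs, hqsfib, hqslim⟩ := lhc A hq hysne hyslim
  have hkey : ∀ k, ent (qs k) ≤ ent (ps (φ k)) := by
    intro k
    have h1 : qs k ∈ fib A (lmap A (emap A (vs (φ k)))) := by
      rw [hvs (φ k)]
      exact hqsfib k
    have := (torus_max A (vs (φ k)) h1).1
    rwa [hvs (φ k)] at this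
  have h1 : Tendsto (fun k => ent (qs k)) atTop (nhds (ent q)) :=
    (continuous_ent.tendsto q).comp hqslim
  have h2 : Tendsto (fun k => ent (ps (φ k))) atTop (nhds (ent x)) :=
    (continuous_ent.tendsto x).comp (hpslim.comp hφ.tendsto_atTop)
  exact le_of_tendsto_of_tendsto' h1 h2 hkey

lemma X_inj (A : Fin m → (Fin n → ℝ)) {x₁ x₂ : Fin m → ℝ} (h₁ : x₁ ∈ toricX A)
    (h₂ : x₂ ∈ toricX A) (heq : lmap A x₁ = lmap A x₂) : x₁ = x₂ := by
  have hf₁ : x₁ ∈ fib A (lmap A x₁) := ⟨toricX_nonneg A h₁, rfl⟩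
  have hf₂ : x₂ ∈ fib A (lmap A x₁) := ⟨toricX_nonneg A h₂, heq.symm⟩
  have hm₁ := X_max A h₁
  have hm₂ := X_max A h₂
  rw [← heq] at hm₂
  exact max_unique A (lmap A x₁) hf₁ hf₂ hm₁ hm₂

/-- a lower bound for the entropy on a bounded part of the orthant. -/
lemma ent_lb (R : ℝ) : ∃ B : ℝ, ∀ p : Fin m → ℝ, (∀ i, 0 ≤ p i) → ‖p‖ ≤ R → B ≤ ent p := by
  set T : Set (Fin m → ℝ) := {p | ‖p‖ ≤ R ∧ ∀ i, 0 ≤ p i} with hT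
  have hTcomp : IsCompact T := by
    apply Metric.isCompact_of_isClosed_isBounded
    · have hrw : T = {p : Fin m → ℝ | ‖p‖ ≤ R} ∩ {p : Fin m → ℝ | ∀ i, 0 ≤ p i} := by
        rw [hT, Set.setOf_and]
      rw [hrw]
      exact (isClosed_le continuous_norm continuous_const).inter isClosed_nonneg
    · rw [Metric.isBounded_iff_subset_closedBall 0]
      exact ⟨R, fun p hp => by rw [Metric.mem_closedBall, dist_zero_right]; exact hp.1⟩
  by_cases hne2 : T.Nonempty
  · obtain ⟨p0, hp0, hmin⟩ := hTcomp.exists_isMinOn hne2 continuous_ent.continuousOn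
    exact ⟨ent p0, fun p hp1 hp2 => hmin ⟨hp2, hp1⟩⟩
  · exact ⟨0, fun p hp1 hp2 => absurd ⟨p, hp2, hp1⟩ hne2⟩

theorem birch_aux (A : Fin m → (Fin n → ℝ)) :
    Set.BijOn (fun p : Fin m → ℝ => ∑ i, p i • A i) (toricX A) (coneOfFam A) ∧
      ∃ h : toricX A ≃ₜ coneOfFam A,
        ∀ p : toricX A, (h p : Fin n → ℝ) = ∑ i, (p : Fin m → ℝ) i • A i := by
  classical
  have hmaps : Set.MapsTo (fun p : Fin m → ℝ => ∑ i, p i • A i) (toricX A) (coneOfFam A) :=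
    fun x hx => ⟨x, toricX_nonneg A hx, rfl⟩
  have hinj : Set.InjOn (fun p : Fin m → ℝ => ∑ i, p i • A i) (toricX A) :=
    fun x₁ h₁ x₂ h₂ heq => X_inj A h₁ h₂ heq
  have hsurj : Set.SurjOn (fun p : Fin m → ℝ => ∑ i, p i • A i) (toricX A) (coneOfFam A) := by
    intro y hy
    obtain ⟨c, hc0, hcy⟩ := hy
    have hfibne : (fib A y).Nonempty := ⟨c, hc0, hcy.symm⟩
    obtain ⟨x, hxfib, hxmax⟩ := exists_max A y hfibne
    have hxX : x ∈ toricX A := by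
      rw [toricX_eq]
      exact max_mem_closure A y hxfib hxmax
    exact ⟨x, hxX, hxfib.2⟩
  refine ⟨⟨hmaps, hinj, hsurj⟩, ?_⟩
  set F : toricX A → coneOfFam A := fun p => ⟨lmap A p.1, hmaps p.2⟩ with hF
  have hFbij : Function.Bijective F := by
    constructor
    · intro a b hab
      exact Subtype.ext (X_inj A a.2 b.2 (congrArg Subtype.val hab))
    · intro z
      obtain ⟨x, hxX, hxy⟩ := hsurj z.2
      exact ⟨⟨x, hxX⟩, Subtype.ext hxy⟩
  have hFcont : Continuous F :=
    ((continuous_lmap A).comp continuous_subtype_val).subtype_mk _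
  set G := (Equiv.ofBijective F hFbij).symm with hG
  have hFG : ∀ w, F (G w) = w := fun w => (Equiv.ofBijective F hFbij).apply_symm_apply w
  have hvals : ∀ w : coneOfFam A, lmap A (G w).1 = w.1 :=
    fun w => congrArg Subtype.val (hFG w)
  have hXmem : ∀ w, (G w).1 ∈ toricX A := fun w => (G w).2
  have hGcont : Continuous G := by
    rw [continuous_iff_seqContinuous]
    intro zs z hzs
    have hzv : Tendsto (fun k => (zs k).1) atTop (nhds z.1) := by
      have := continuous_subtype_val.tendsto z
      exact this.comp hzs
    have key : Tendsto (fun k => (G (zs k)).1) atTop (nhds ((G z).1)) := by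
      apply tendsto_of_subseq_tendsto
      intro ns hns
      set ys : ℕ → Fin n → ℝ := fun j => (zs (ns j)).1 with hys
      have hyslim : Tendsto ys atTop (nhds z.1) := hzv.comp hns
      obtain ⟨K, hK⟩ : ∃ K, ∀ j, ‖ys j‖ ≤ K := by
        obtain ⟨K, hK⟩ := hyslim.norm.bddAbove_range
        exact ⟨K, fun j => hK (Set.mem_range_self j)⟩
      obtain ⟨R, hR⟩ := bounded_selection A K
      have hfibne : ∀ j, (fib A (ys j)).Nonempty := fun j =>
        ⟨(G (zs (ns j))).1, toricX_nonneg A (hXmem _), hvals _⟩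
      choose cs hcsfib hcsR using fun j => hR (ys j) (hfibne j) (hK j)
      obtain ⟨B, hB⟩ := ent_lb R
      have hmem : ∀ j, (G (zs (ns j))).1 ∈ {p : Fin m → ℝ | (∀ i, 0 ≤ p i) ∧ B ≤ ent p} := by
        intro j
        refine ⟨toricX_nonneg A (hXmem _), ?_⟩
        have h1 : cs j ∈ fib A (lmap A ((G (zs (ns j))).1)) := by
          rw [hvals]; exact hcsfib j
        exact (hB (cs j) (hcsfib j).1 (hcsR j)).trans (X_max A (hXmem _) (cs j) h1)
      obtain ⟨xt, hxtS, ms, hms, hlim⟩ := (isCompact_superlevel B).tendsto_subseq hmem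
      refine ⟨ms, ?_⟩
      have hxtX : xt ∈ toricX A :=
        (isClosed_toricX A).mem_of_tendsto hlim
          (Eventually.of_forall fun j => hXmem _)
      have hxtl : lmap A xt = z.1 := by
        have h1 : Tendsto (fun j => lmap A ((G (zs (ns (ms j)))).1)) atTop
            (nhds (lmap A xt)) := ((continuous_lmap A).tendsto xt).comp hlim
        have h2 : Tendsto (fun j => lmap A ((G (zs (ns (ms j)))).1)) atTop (nhds z.1) := by
          have h3 : ∀ j, lmap A ((G (zs (ns (ms j)))).1) = ys (ms j) := fun j => hvals _
          rw [show (fun j => lmap A ((G (zs (ns (ms j)))).1)) = fun j => ys (ms j) from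
            funext h3]
          exact hyslim.comp hms.tendsto_atTop
        exact tendsto_nhds_unique h1 h2
      have hfinal : xt = (G z).1 :=
        X_inj A hxtX (hXmem z) (hxtl.trans (hvals z).symm)
      rw [hfinal] at hlim
      exact hlim
    exact tendsto_subtype_rng.mpr key
  refine ⟨⟨(Equiv.ofBijective F hFbij), hFcont, hGcont⟩, fun p => rfl⟩

end BirchAux

/-- Birch's theorem (irrational version): the map `p ↦ Σᵢ pᵢ aᵢ` restricts to a bijection,
in fact a homeomorphism, from `X_𝒜` onto `cone(𝒜)`. -/
theorem birch {n m : ℕ} (A : Fin m → (Fin n → ℝ)) :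
    Set.BijOn (fun p : Fin m → ℝ => ∑ i, p i • A i) (toricX A) (coneOfFam A) ∧
      ∃ h : toricX A ≃ₜ coneOfFam A,
        ∀ p : toricX A, (h p : Fin n → ℝ) = ∑ i, (p : Fin m → ℝ) i • A i := by
  exact BirchAux.birch_aux A
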